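/- The kernel of the ℂ[x,y,z,t]-linear map φ : ℂ[x,y,z,t]³ → ℂ[u,v], (a,b,c) ↦ ψ(a)·v + ψ(b)·u + ψ(c), equals the submodule of ℂ[x,y,z,t]³ generated by the six columns of the matrix M. -/

import Mathlib

noncomputable section

open MvPolynomial

namespace Reid

abbrev A : Type := MvPolynomial (Fin 4) ℂ
abbrev B : Type := MvPolynomial (Fin 2) ℂ

def u : B := X 0
def v : B := X 1

/-- The ℂ-algebra homomorphism `ψ : ℂ[x,y,z,t] → ℂ[u,v]` with
`ψ(x) = u²`, `ψ(y) = uv`, `ψ(z) = u³ + v²`, `ψ(t) = u³v + v³`. -/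
def ψ : A →ₐ[ℂ] B := aeval ![u ^ 2, u * v, u ^ 3 + v ^ 2, u ^ 3 * v + v ^ 3]

def x : A := X 0
def y : A := X 1
def z : A := X 2
def t : A := X 3

/-- The 3×6 matrix `M` of relations. -/
def M : Matrix (Fin 3) (Fin 6) A :=
  !![-x, -y, -z, -t, 0, 0;
     y, z, 0, -(x * z), t, x ^ 2;
     0, -x ^ 2, t, z ^ 2, -(y * z), -(x * z) + y ^ 2]

def q : A := t - x * y

def NN : Submodule A (Fin 3 → A) :=
  Submodule.span A {c : Fin 3 → A | ∃ j : Fin 6, c = fun i => M i j}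

lemma mem_of_eq {a b : Fin 3 → A} (h : a = b) (hb : b ∈ NN) : a ∈ NN := h ▸ hb

lemma col_mem (j : Fin 6) : (fun i => M i j) ∈ NN := Submodule.subset_span ⟨j, rfl⟩

lemma hV1 : (![-x, y, 0] : Fin 3 → A) ∈ NN := by
  refine mem_of_eq ?_ (col_mem 0); funext i; fin_cases i <;> simp [M]

lemma hV2 : (![-y, z, -(x ^ 2)] : Fin 3 → A) ∈ NN := by
  refine mem_of_eq ?_ (col_mem 1); funext i; fin_cases i <;> simp [M]

lemma hV3 : (![-z, 0, t] : Fin 3 → A) ∈ NN := by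
  refine mem_of_eq ?_ (col_mem 2); funext i; fin_cases i <;> simp [M]

lemma hV4 : (![-t, -(x * z), z ^ 2] : Fin 3 → A) ∈ NN := by
  refine mem_of_eq ?_ (col_mem 3); funext i; fin_cases i <;> simp [M]

lemma hV5 : (![0, t, -(y * z)] : Fin 3 → A) ∈ NN := by
  refine mem_of_eq ?_ (col_mem 4); funext i; fin_cases i <;> simp [M]

lemma hV6 : (![0, x ^ 2, -(x * z) + y ^ 2] : Fin 3 → A) ∈ NN := by
  refine mem_of_eq ?_ (col_mem 5); funext i; fin_cases i <;> rfl

lemma hW1 : (![-(y ^ 2), 0, x * q] : Fin 3 → A) ∈ NN := by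
  refine mem_of_eq ?_
    (add_mem (add_mem (NN.smul_mem (-z) hV1) (NN.smul_mem y hV2)) (NN.smul_mem x hV3))
  funext i; fin_cases i <;> simp [q] <;> ring

lemma hW2 : (![0, x * q, -(y ^ 3)] : Fin 3 → A) ∈ NN := by
  refine mem_of_eq ?_ (add_mem (NN.smul_mem x hV5) (NN.smul_mem (-y) hV6))
  funext i; fin_cases i <;> simp [q] <;> ring

lemma hW3 : (![x * q, x * y ^ 2, -(y ^ 2 * z)] : Fin 3 → A) ∈ NN := by
  refine mem_of_eq ?_
    (add_mem (add_mem (NN.smul_mem (x * y) hV1) (NN.smul_mem (-x) hV4)) (NN.smul_mem (-z) hV6))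
  funext i; fin_cases i <;> simp [q] <;> ring

lemma hW4 : (![0, -(y ^ 3), x ^ 2 * q] : Fin 3 → A) ∈ NN := by
  refine mem_of_eq ?_
    (add_mem (add_mem (NN.smul_mem (-(y ^ 2 + x * z)) hV1) (NN.smul_mem (x * y) hV2))
      (NN.smul_mem (x ^ 2) hV3))
  funext i; fin_cases i <;> simp [q] <;> ring

lemma hW5 : (![0, x * z - y ^ 2, -(x ^ 3)] : Fin 3 → A) ∈ NN := by
  refine mem_of_eq ?_ (add_mem (NN.smul_mem (-y) hV1) (NN.smul_mem x hV2))
  funext i; fin_cases i <;> simp [q] <;> ring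

lemma hW6 : (![z * q - y ^ 3, 0, -(q ^ 2)] : Fin 3 → A) ∈ NN := by
  refine mem_of_eq ?_
    (add_mem (add_mem (NN.smul_mem (-(y * z)) hV1) (NN.smul_mem (y ^ 2) hV2))
      (NN.smul_mem (2 * x * y - t) hV3))
  funext i; fin_cases i <;> simp [q] <;> ring

lemma hW7 : (![-(q ^ 2), -(x * (z * q - y ^ 3)), z * (z * q - y ^ 3)] : Fin 3 → A) ∈ NN := by
  refine mem_of_eq ?_
    (add_mem (add_mem (NN.smul_mem (-(y * q)) hV1) (NN.smul_mem q hV4))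
      (NN.smul_mem (y ^ 2) hV5))
  funext i; fin_cases i <;> simp [q] <;> ring

def σm (m n : ℕ) : Fin 3 → A :=
  if n ≤ m then
    if (m - n) % 2 = 0 then ![0, 0, x ^ ((m - n) / 2) * y ^ n]
    else ![0, x ^ ((m - n) / 2) * y ^ n, 0]
  else
    if (n - m) % 3 = 0 then ![0, 0, y ^ m * q ^ ((n - m) / 3)]
    else if (n - m) % 3 = 1 then ![y ^ m * q ^ ((n - m) / 3), 0, 0]
    else ![0, -(x * y ^ m * q ^ ((n - m) / 3)), z * y ^ m * q ^ ((n - m) / 3)]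

lemma σm_even {m n a : ℕ} (h : n ≤ m) (h2 : (m - n) % 2 = 0) (ha : (m - n) / 2 = a) :
    σm m n = ![0, 0, x ^ a * y ^ n] := by
  subst ha; rw [σm, if_pos h, if_pos h2]

lemma σm_odd {m n a : ℕ} (h : n ≤ m) (h2 : (m - n) % 2 = 1) (ha : (m - n) / 2 = a) :
    σm m n = ![0, x ^ a * y ^ n, 0] := by
  subst ha; rw [σm, if_pos h, if_neg (by omega)]

lemma σm_r0 {m n b : ℕ} (h : m < n) (h3 : (n - m) % 3 = 0) (hb : (n - m) / 3 = b) :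
    σm m n = ![0, 0, y ^ m * q ^ b] := by
  subst hb; rw [σm, if_neg (by omega), if_pos h3]

lemma σm_r1 {m n b : ℕ} (h : m < n) (h3 : (n - m) % 3 = 1) (hb : (n - m) / 3 = b) :
    σm m n = ![y ^ m * q ^ b, 0, 0] := by
  subst hb; rw [σm, if_neg (by omega), if_neg (by omega), if_pos h3]

lemma σm_r2 {m n b : ℕ} (h : m < n) (h3 : (n - m) % 3 = 2) (hb : (n - m) / 3 = b) :
    σm m n = ![0, -(x * y ^ m * q ^ b), z * y ^ m * q ^ b] := by
  subst hb; rw [σm, if_neg (by omega), if_neg (by omega), if_neg (by omega)]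

lemma Lx (m n : ℕ) : x • σm m n - σm (m + 2) n ∈ NN := by
  rcases le_or_gt n m with h | h
  · by_cases hp : (m - n) % 2 = 0
    · rw [σm_even h hp rfl,
        σm_even (by omega) (by omega) (show (m + 2 - n) / 2 = (m - n) / 2 + 1 by omega)]
      refine mem_of_eq ?_ NN.zero_mem
      funext i; fin_cases i <;> simp [q] <;> ring
    · rw [σm_odd h (by omega) rfl,
        σm_odd (by omega) (by omega) (show (m + 2 - n) / 2 = (m - n) / 2 + 1 by omega)]
      refine mem_of_eq ?_ NN.zero_mem
      funext i; fin_cases i <;> simp [q] <;> ring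
  · rcases Nat.lt_or_ge n (m + 2) with h2 | h2
    · obtain rfl : n = m + 1 := by omega
      rw [σm_r1 (by omega) (by omega) (show (m + 1 - m) / 3 = 0 by omega),
        σm_odd (by omega) (by omega) (show (m + 2 - (m + 1)) / 2 = 0 by omega)]
      refine mem_of_eq ?_ (NN.smul_mem (-(y ^ m)) hV1)
      funext i; fin_cases i <;> simp [q] <;> ring
    · have h3 : (n - m) % 3 = 0 ∨ (n - m) % 3 = 1 ∨ (n - m) % 3 = 2 := by omega
      rcases h3 with h3 | h3 | h3
      · obtain ⟨c, rfl⟩ : ∃ c, n = m + 3 * c + 3 := ⟨(n - m) / 3 - 1, by omega⟩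
        rw [σm_r0 (by omega) (by omega) (show (m + 3 * c + 3 - m) / 3 = c + 1 by omega),
          σm_r1 (by omega) (by omega) (show (m + 3 * c + 3 - (m + 2)) / 3 = c by omega)]
        refine mem_of_eq ?_ (NN.smul_mem (y ^ m * q ^ c) hW1)
        funext i; fin_cases i <;> simp [q] <;> ring
      · obtain ⟨c, rfl⟩ : ∃ c, n = m + 3 * c + 4 := ⟨(n - m) / 3 - 1, by omega⟩
        rw [σm_r1 (by omega) (by omega) (show (m + 3 * c + 4 - m) / 3 = c + 1 by omega),
          σm_r2 (by omega) (by omega) (show (m + 3 * c + 4 - (m + 2)) / 3 = c by omega)]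
        refine mem_of_eq ?_ (NN.smul_mem (y ^ m * q ^ c) hW3)
        funext i; fin_cases i <;> simp [q] <;> ring
      · obtain ⟨c, rfl⟩ : ∃ c, n = m + 3 * c + 2 := ⟨(n - m) / 3, by omega⟩
        rw [σm_r2 (by omega) (by omega) (show (m + 3 * c + 2 - m) / 3 = c by omega)]
        rcases Nat.eq_zero_or_pos c with rfl | hc
        · rw [σm_even (by omega) (by omega)
            (show (m + 2 - (m + 3 * 0 + 2)) / 2 = 0 by omega)]
          refine mem_of_eq ?_ (NN.smul_mem (-(y ^ m * q ^ 0)) hV6)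
          funext i; fin_cases i <;> simp [q] <;> ring
        · rw [σm_r0 (by omega) (by omega)
            (show (m + 3 * c + 2 - (m + 2)) / 3 = c by omega)]
          refine mem_of_eq ?_ (NN.smul_mem (-(y ^ m * q ^ c)) hV6)
          funext i; fin_cases i <;> simp [q] <;> ring

lemma Ly (m n : ℕ) : y • σm m n - σm (m + 1) (n + 1) ∈ NN := by
  rcases le_or_gt n m with h | h
  · by_cases hp : (m - n) % 2 = 0
    · rw [σm_even h hp rfl,
        σm_even (by omega) (by omega) (show (m + 1 - (n + 1)) / 2 = (m - n) / 2 by omega)]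
      refine mem_of_eq ?_ NN.zero_mem
      funext i; fin_cases i <;> simp [q] <;> ring
    · rw [σm_odd h (by omega) rfl,
        σm_odd (by omega) (by omega) (show (m + 1 - (n + 1)) / 2 = (m - n) / 2 by omega)]
      refine mem_of_eq ?_ NN.zero_mem
      funext i; fin_cases i <;> simp [q] <;> ring
  · have h3 : (n - m) % 3 = 0 ∨ (n - m) % 3 = 1 ∨ (n - m) % 3 = 2 := by omega
    rcases h3 with h3 | h3 | h3
    · rw [σm_r0 h h3 rfl,
        σm_r0 (by omega) (by omega) (show (n + 1 - (m + 1)) / 3 = (n - m) / 3 by omega)]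
      refine mem_of_eq ?_ NN.zero_mem
      funext i; fin_cases i <;> simp [q] <;> ring
    · rw [σm_r1 h h3 rfl,
        σm_r1 (by omega) (by omega) (show (n + 1 - (m + 1)) / 3 = (n - m) / 3 by omega)]
      refine mem_of_eq ?_ NN.zero_mem
      funext i; fin_cases i <;> simp [q] <;> ring
    · rw [σm_r2 h h3 rfl,
        σm_r2 (by omega) (by omega) (show (n + 1 - (m + 1)) / 3 = (n - m) / 3 by omega)]
      refine mem_of_eq ?_ NN.zero_mem
      funext i; fin_cases i <;> simp [q] <;> ring

lemma Lz (m n : ℕ) : z • σm m n - σm (m + 3) n - σm m (n + 2) ∈ NN := by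
  rcases le_or_gt n m with h | h
  · by_cases hp : (m - n) % 2 = 0
    · rcases Nat.eq_zero_or_pos (m - n) with h0 | h0
      · obtain rfl : m = n := by omega
        rw [σm_even (le_refl m) (by omega) (show (m - m) / 2 = 0 by omega),
          σm_odd (by omega) (by omega) (show (m + 3 - m) / 2 = 1 by omega),
          σm_r2 (by omega) (by omega) (show (m + 2 - m) / 3 = 0 by omega)]
        refine mem_of_eq ?_ NN.zero_mem
        funext i; fin_cases i <;> simp [q] <;> ring
      · obtain ⟨a, rfl⟩ : ∃ a, m = n + 2 * a + 2 := ⟨(m - n) / 2 - 1, by omega⟩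
        rw [σm_even (by omega) (by omega) (show (n + 2 * a + 2 - n) / 2 = a + 1 by omega),
          σm_odd (by omega) (by omega) (show (n + 2 * a + 2 + 3 - n) / 2 = a + 2 by omega),
          σm_even (by omega) (by omega) (show (n + 2 * a + 2 - (n + 2)) / 2 = a by omega)]
        refine mem_of_eq ?_ (NN.smul_mem (-(x ^ a * y ^ n)) hV6)
        funext i; fin_cases i <;> simp [q] <;> ring
    · rcases Nat.lt_or_ge (m - n) 3 with h0 | h0
      · obtain rfl : m = n + 1 := by omega
        rw [σm_odd (by omega) (by omega) (show (n + 1 - n) / 2 = 0 by omega),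
          σm_even (by omega) (by omega) (show (n + 1 + 3 - n) / 2 = 2 by omega),
          σm_r1 (by omega) (by omega) (show (n + 2 - (n + 1)) / 3 = 0 by omega)]
        refine mem_of_eq ?_ (NN.smul_mem (y ^ n) hV2)
        funext i; fin_cases i <;> simp [q] <;> ring
      · obtain ⟨a, rfl⟩ : ∃ a, m = n + 2 * a + 3 := ⟨(m - n) / 2 - 1, by omega⟩
        rw [σm_odd (by omega) (by omega) (show (n + 2 * a + 3 - n) / 2 = a + 1 by omega),
          σm_even (by omega) (by omega) (show (n + 2 * a + 3 + 3 - n) / 2 = a + 3 by omega),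
          σm_odd (by omega) (by omega) (show (n + 2 * a + 3 - (n + 2)) / 2 = a by omega)]
        refine mem_of_eq ?_ (NN.smul_mem (x ^ a * y ^ n) hW5)
        funext i; fin_cases i <;> simp [q] <;> ring
  · rcases Nat.lt_or_ge n (m + 2) with h2 | h2
    · obtain rfl : n = m + 1 := by omega
      rw [σm_r1 (by omega) (by omega) (show (m + 1 - m) / 3 = 0 by omega),
        σm_even (by omega) (by omega) (show (m + 3 - (m + 1)) / 2 = 1 by omega),
        σm_r0 (by omega) (by omega) (show (m + 1 + 2 - m) / 3 = 1 by omega)]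
      refine mem_of_eq ?_ (NN.smul_mem (-(y ^ m)) hV3)
      funext i; fin_cases i <;> simp [q] <;> ring
    · rcases Nat.lt_or_ge n (m + 3) with h2' | h2'
      · obtain rfl : n = m + 2 := by omega
        rw [σm_r2 (by omega) (by omega) (show (m + 2 - m) / 3 = 0 by omega),
          σm_odd (by omega) (by omega) (show (m + 3 - (m + 2)) / 2 = 0 by omega),
          σm_r1 (by omega) (by omega) (show (m + 2 + 2 - m) / 3 = 1 by omega)]
        refine mem_of_eq ?_
          (sub_mem (NN.smul_mem (y ^ m) hV4) (NN.smul_mem (y ^ (m + 1)) hV1))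
        funext i; fin_cases i <;> simp [q] <;> ring
      · have h3 : (n - m) % 3 = 0 ∨ (n - m) % 3 = 1 ∨ (n - m) % 3 = 2 := by omega
        rcases h3 with h3 | h3 | h3
        · obtain ⟨c, rfl⟩ : ∃ c, n = m + 3 * c + 3 := ⟨(n - m) / 3 - 1, by omega⟩
          rw [σm_r0 (by omega) (by omega) (show (m + 3 * c + 3 - m) / 3 = c + 1 by omega),
            σm_r2 (by omega) (by omega)
              (show (m + 3 * c + 3 + 2 - m) / 3 = c + 1 by omega)]
          rcases Nat.eq_zero_or_pos c with rfl | hc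
          · rw [σm_even (by omega) (by omega)
              (show (m + 3 - (m + 3 * 0 + 3)) / 2 = 0 by omega)]
            refine mem_of_eq ?_ (NN.smul_mem (y ^ m * q ^ 0) hW2)
            funext i; fin_cases i <;> simp [q] <;> ring
          · rw [σm_r0 (by omega) (by omega)
              (show (m + 3 * c + 3 - (m + 3)) / 3 = c by omega)]
            refine mem_of_eq ?_ (NN.smul_mem (y ^ m * q ^ c) hW2)
            funext i; fin_cases i <;> simp [q] <;> ring
        · obtain ⟨c, rfl⟩ : ∃ c, n = m + 3 * c + 4 := ⟨(n - m) / 3 - 1, by omega⟩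
          rw [σm_r1 (by omega) (by omega) (show (m + 3 * c + 4 - m) / 3 = c + 1 by omega),
            σm_r1 (by omega) (by omega) (show (m + 3 * c + 4 - (m + 3)) / 3 = c by omega),
            σm_r0 (by omega) (by omega)
              (show (m + 3 * c + 4 + 2 - m) / 3 = c + 2 by omega)]
          refine mem_of_eq ?_ (NN.smul_mem (y ^ m * q ^ c) hW6)
          funext i; fin_cases i <;> simp [q] <;> ring
        · obtain ⟨c, rfl⟩ : ∃ c, n = m + 3 * c + 5 := ⟨(n - m) / 3 - 1, by omega⟩
          rw [σm_r2 (by omega) (by omega) (show (m + 3 * c + 5 - m) / 3 = c + 1 by omega),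
            σm_r2 (by omega) (by omega) (show (m + 3 * c + 5 - (m + 3)) / 3 = c by omega),
            σm_r1 (by omega) (by omega)
              (show (m + 3 * c + 5 + 2 - m) / 3 = c + 2 by omega)]
          refine mem_of_eq ?_ (NN.smul_mem (y ^ m * q ^ c) hW7)
          funext i; fin_cases i <;> simp [q] <;> ring

lemma Lt (m n : ℕ) : t • σm m n - σm (m + 3) (n + 1) - σm m (n + 3) ∈ NN := by
  rcases le_or_gt n m with h | h
  · by_cases hp : (m - n) % 2 = 0
    · rcases Nat.lt_or_ge (m - n) 2 with h0 | h0
      · obtain rfl : m = n := by omega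
        rw [σm_even (le_refl m) (by omega) (show (m - m) / 2 = 0 by omega),
          σm_even (by omega) (by omega) (show (m + 3 - (m + 1)) / 2 = 1 by omega),
          σm_r0 (by omega) (by omega) (show (m + 3 - m) / 3 = 1 by omega)]
        refine mem_of_eq ?_ NN.zero_mem
        funext i; fin_cases i <;> simp [q] <;> ring
      · rcases Nat.lt_or_ge (m - n) 4 with h1 | h1
        · obtain rfl : m = n + 2 := by omega
          rw [σm_even (by omega) (by omega) (show (n + 2 - n) / 2 = 1 by omega),
            σm_even (by omega) (by omega) (show (n + 2 + 3 - (n + 1)) / 2 = 2 by omega),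
            σm_r1 (by omega) (by omega) (show (n + 3 - (n + 2)) / 3 = 0 by omega)]
          refine mem_of_eq ?_ (NN.smul_mem (y ^ n) hW1)
          funext i; fin_cases i <;> simp [q] <;> ring
        · obtain ⟨a, rfl⟩ : ∃ a, m = n + 2 * a + 4 := ⟨(m - n) / 2 - 2, by omega⟩
          rw [σm_even (by omega) (by omega) (show (n + 2 * a + 4 - n) / 2 = a + 2 by omega),
            σm_even (by omega) (by omega)
              (show (n + 2 * a + 4 + 3 - (n + 1)) / 2 = a + 3 by omega),
            σm_odd (by omega) (by omega)
              (show (n + 2 * a + 4 - (n + 3)) / 2 = a by omega)]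
          refine mem_of_eq ?_ (NN.smul_mem (x ^ a * y ^ n) hW4)
          funext i; fin_cases i <;> simp [q] <;> ring
    · rcases Nat.lt_or_ge (m - n) 3 with h0 | h0
      · obtain rfl : m = n + 1 := by omega
        rw [σm_odd (by omega) (by omega) (show (n + 1 - n) / 2 = 0 by omega),
          σm_odd (by omega) (by omega) (show (n + 1 + 3 - (n + 1)) / 2 = 1 by omega),
          σm_r2 (by omega) (by omega) (show (n + 3 - (n + 1)) / 3 = 0 by omega)]
        refine mem_of_eq ?_ (NN.smul_mem (y ^ n) hV5)
        funext i; fin_cases i <;> simp [q] <;> ring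
      · obtain ⟨a, rfl⟩ : ∃ a, m = n + 2 * a + 3 := ⟨(m - n) / 2 - 1, by omega⟩
        rw [σm_odd (by omega) (by omega) (show (n + 2 * a + 3 - n) / 2 = a + 1 by omega),
          σm_odd (by omega) (by omega)
            (show (n + 2 * a + 3 + 3 - (n + 1)) / 2 = a + 2 by omega),
          σm_even (by omega) (by omega)
            (show (n + 2 * a + 3 - (n + 3)) / 2 = a by omega)]
        refine mem_of_eq ?_ (NN.smul_mem (x ^ a * y ^ n) hW2)
        funext i; fin_cases i <;> simp [q] <;> ring
  · rcases Nat.lt_or_ge n (m + 2) with h2 | h2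
    · obtain rfl : n = m + 1 := by omega
      rw [σm_r1 (by omega) (by omega) (show (m + 1 - m) / 3 = 0 by omega),
        σm_odd (by omega) (by omega) (show (m + 3 - (m + 1 + 1)) / 2 = 0 by omega),
        σm_r1 (by omega) (by omega) (show (m + 1 + 3 - m) / 3 = 1 by omega)]
      refine mem_of_eq ?_ (NN.smul_mem (-(y ^ (m + 1))) hV1)
      funext i; fin_cases i <;> simp [q] <;> ring
    · rcases Nat.lt_or_ge n (m + 3) with h2' | h2'
      · obtain rfl : n = m + 2 := by omega
        rw [σm_r2 (by omega) (by omega) (show (m + 2 - m) / 3 = 0 by omega),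
          σm_even (by omega) (by omega) (show (m + 3 - (m + 2 + 1)) / 2 = 0 by omega),
          σm_r2 (by omega) (by omega) (show (m + 2 + 3 - m) / 3 = 1 by omega)]
        refine mem_of_eq ?_ (NN.smul_mem (-(y ^ (m + 1))) hV6)
        funext i; fin_cases i <;> simp [q] <;> ring
      · have h3 : (n - m) % 3 = 0 ∨ (n - m) % 3 = 1 ∨ (n - m) % 3 = 2 := by omega
        rcases h3 with h3 | h3 | h3
        · obtain ⟨c, rfl⟩ : ∃ c, n = m + 3 * c + 3 := ⟨(n - m) / 3 - 1, by omega⟩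
          rw [σm_r0 (by omega) (by omega) (show (m + 3 * c + 3 - m) / 3 = c + 1 by omega),
            σm_r1 (by omega) (by omega)
              (show (m + 3 * c + 3 + 1 - (m + 3)) / 3 = c by omega),
            σm_r0 (by omega) (by omega)
              (show (m + 3 * c + 3 + 3 - m) / 3 = c + 2 by omega)]
          refine mem_of_eq ?_ (NN.smul_mem (y ^ (m + 1) * q ^ c) hW1)
          funext i; fin_cases i <;> simp [q] <;> ring
        · obtain ⟨c, rfl⟩ : ∃ c, n = m + 3 * c + 4 := ⟨(n - m) / 3 - 1, by omega⟩
          rw [σm_r1 (by omega) (by omega) (show (m + 3 * c + 4 - m) / 3 = c + 1 by omega),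
            σm_r2 (by omega) (by omega)
              (show (m + 3 * c + 4 + 1 - (m + 3)) / 3 = c by omega),
            σm_r1 (by omega) (by omega)
              (show (m + 3 * c + 4 + 3 - m) / 3 = c + 2 by omega)]
          refine mem_of_eq ?_ (NN.smul_mem (y ^ (m + 1) * q ^ c) hW3)
          funext i; fin_cases i <;> simp [q] <;> ring
        · obtain ⟨c, rfl⟩ : ∃ c, n = m + 3 * c + 5 := ⟨(n - m) / 3 - 1, by omega⟩
          rw [σm_r2 (by omega) (by omega) (show (m + 3 * c + 5 - m) / 3 = c + 1 by omega),
            σm_r0 (by omega) (by omega)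
              (show (m + 3 * c + 5 + 1 - (m + 3)) / 3 = c + 1 by omega),
            σm_r2 (by omega) (by omega)
              (show (m + 3 * c + 5 + 3 - m) / 3 = c + 2 by omega)]
          refine mem_of_eq ?_ (NN.smul_mem (-(y ^ (m + 1) * q ^ (c + 1))) hV6)
          funext i; fin_cases i <;> simp [q] <;> ring
def Φ (w : Fin 3 → A) : B := ψ (w 0) * v + ψ (w 1) * u + ψ (w 2)

lemma Φ_add (w₁ w₂ : Fin 3 → A) : Φ (w₁ + w₂) = Φ w₁ + Φ w₂ := by
  simp only [Φ, Pi.add_apply, map_add]; ring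

lemma Φ_smul (a : A) (w : Fin 3 → A) : Φ (a • w) = ψ a * Φ w := by
  simp only [Φ, Pi.smul_apply, smul_eq_mul, map_mul]; ring

def Sig (p : B) : Fin 3 → A :=
  ∑ d ∈ p.support, (coeff d p) • σm (d 0) (d 1)

lemma Sig_subset {p : B} {s : Finset (Fin 2 →₀ ℕ)} (h : p.support ⊆ s) :
    Sig p = ∑ d ∈ s, (coeff d p) • σm (d 0) (d 1) :=
  Finset.sum_subset h fun d _ hd => by
    rw [notMem_support_iff.mp hd, zero_smul]

lemma Sig_add (p₁ p₂ : B) : Sig (p₁ + p₂) = Sig p₁ + Sig p₂ := by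
  rw [Sig_subset (s := p₁.support ∪ p₂.support) support_add,
    Sig_subset (s := p₁.support ∪ p₂.support) Finset.subset_union_left,
    Sig_subset (s := p₁.support ∪ p₂.support) Finset.subset_union_right,
    ← Finset.sum_add_distrib]
  exact Finset.sum_congr rfl fun d _ => by rw [coeff_add, add_smul]

lemma Sig_monomial (d : Fin 2 →₀ ℕ) (c : ℂ) :
    Sig (monomial d c) = c • σm (d 0) (d 1) := by
  by_cases hc : c = 0
  · subst hc; simp [Sig]
  · rw [Sig, support_monomial, if_neg hc, Finset.sum_singleton, coeff_monomial, if_pos rfl]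

lemma Sig_zero : Sig 0 = 0 := by simp [Sig]

lemma ψx : ψ x = u ^ 2 := by simp [ψ, x]
lemma ψy : ψ y = u * v := by simp [ψ, y]
lemma ψz : ψ z = u ^ 3 + v ^ 2 := by simp [ψ, z]
lemma ψt : ψ t = u ^ 3 * v + v ^ 3 := by simp [ψ, t]

lemma hu_pow (k : ℕ) : (u ^ k : B) = monomial (Finsupp.single 0 k) 1 := X_pow_eq_monomial
lemma hv_pow (k : ℕ) : (v ^ k : B) = monomial (Finsupp.single 1 k) 1 := X_pow_eq_monomial
lemma hu_mono : (u : B) = monomial (Finsupp.single 0 1) 1 := rfl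
lemma hv_mono : (v : B) = monomial (Finsupp.single 1 1) 1 := rfl

lemma fs00 (k : ℕ) (d : Fin 2 →₀ ℕ) : (Finsupp.single (0 : Fin 2) k + d) 0 = d 0 + k := by
  simp [Finsupp.add_apply]; ring
lemma fs01 (k : ℕ) (d : Fin 2 →₀ ℕ) : (Finsupp.single (0 : Fin 2) k + d) 1 = d 1 := by
  simp [Finsupp.add_apply, Finsupp.single_apply]
lemma fs10 (k : ℕ) (d : Fin 2 →₀ ℕ) : (Finsupp.single (1 : Fin 2) k + d) 0 = d 0 := by
  simp [Finsupp.add_apply, Finsupp.single_apply]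
lemma fs11 (k : ℕ) (d : Fin 2 →₀ ℕ) : (Finsupp.single (1 : Fin 2) k + d) 1 = d 1 + k := by
  simp [Finsupp.add_apply]; ring
lemma fsm0 (j k : ℕ) (d : Fin 2 →₀ ℕ) :
    (Finsupp.single (0 : Fin 2) j + Finsupp.single (1 : Fin 2) k + d) 0 = d 0 + j := by
  simp [Finsupp.add_apply, Finsupp.single_apply]; ring
lemma fsm1 (j k : ℕ) (d : Fin 2 →₀ ℕ) :
    (Finsupp.single (0 : Fin 2) j + Finsupp.single (1 : Fin 2) k + d) 1 = d 1 + k := by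
  simp [Finsupp.add_apply, Finsupp.single_apply]; ring

lemma smul_sub_smul (c : ℂ) (g : A) (s s' : Fin 3 → A) :
    g • (c • s) - c • s' = c • (g • s - s') := by
  funext i
  simp only [Pi.smul_apply, Pi.sub_apply, smul_eq_mul, MvPolynomial.smul_eq_C_mul]
  ring

lemma smul_sub_smul₂ (c : ℂ) (g : A) (s s₁ s₂ : Fin 3 → A) :
    g • (c • s) - (c • s₁ + c • s₂) = c • (g • s - s₁ - s₂) := by
  funext i
  simp only [Pi.smul_apply, Pi.sub_apply, Pi.add_apply, smul_eq_mul,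
    MvPolynomial.smul_eq_C_mul]
  ring

lemma SigStab_x (p : B) : x • Sig p - Sig (ψ x * p) ∈ NN := by
  induction p using MvPolynomial.induction_on' with
  | monomial d c =>
    rw [ψx, hu_pow, monomial_mul, one_mul, Sig_monomial, Sig_monomial,
      fs00, fs01, smul_sub_smul]
    exact Submodule.smul_of_tower_mem NN c (Lx (d 0) (d 1))
  | add p₁ p₂ hp₁ hp₂ =>
    rw [mul_add, Sig_add, Sig_add, smul_add,
      show x • Sig p₁ + x • Sig p₂ - (Sig (ψ x * p₁) + Sig (ψ x * p₂)) =
        (x • Sig p₁ - Sig (ψ x * p₁)) + (x • Sig p₂ - Sig (ψ x * p₂)) by abel]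
    exact add_mem hp₁ hp₂

lemma SigStab_y (p : B) : y • Sig p - Sig (ψ y * p) ∈ NN := by
  induction p using MvPolynomial.induction_on' with
  | monomial d c =>
    rw [ψy, hu_mono, hv_mono]
    rw [monomial_mul, one_mul, monomial_mul, one_mul, Sig_monomial, Sig_monomial,
      fsm0, fsm1, smul_sub_smul]
    exact Submodule.smul_of_tower_mem NN c (Ly (d 0) (d 1))
  | add p₁ p₂ hp₁ hp₂ =>
    rw [mul_add, Sig_add, Sig_add, smul_add,
      show y • Sig p₁ + y • Sig p₂ - (Sig (ψ y * p₁) + Sig (ψ y * p₂)) =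
        (y • Sig p₁ - Sig (ψ y * p₁)) + (y • Sig p₂ - Sig (ψ y * p₂)) by abel]
    exact add_mem hp₁ hp₂

lemma SigStab_z (p : B) : z • Sig p - Sig (ψ z * p) ∈ NN := by
  induction p using MvPolynomial.induction_on' with
  | monomial d c =>
    rw [ψz, add_mul, hu_pow, hv_pow]
    simp only [monomial_mul, one_mul]
    rw [Sig_add, Sig_monomial, Sig_monomial, Sig_monomial,
      fs00, fs01, fs10, fs11, smul_sub_smul₂]
    exact Submodule.smul_of_tower_mem NN c (Lz (d 0) (d 1))
  | add p₁ p₂ hp₁ hp₂ =>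
    rw [mul_add, Sig_add, Sig_add, smul_add,
      show z • Sig p₁ + z • Sig p₂ - (Sig (ψ z * p₁) + Sig (ψ z * p₂)) =
        (z • Sig p₁ - Sig (ψ z * p₁)) + (z • Sig p₂ - Sig (ψ z * p₂)) by abel]
    exact add_mem hp₁ hp₂

lemma SigStab_t (p : B) : t • Sig p - Sig (ψ t * p) ∈ NN := by
  induction p using MvPolynomial.induction_on' with
  | monomial d c =>
    rw [ψt, add_mul, hu_pow, hv_pow, hv_mono]
    simp only [monomial_mul, one_mul]
    rw [Sig_add, Sig_monomial, Sig_monomial, Sig_monomial,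
      fsm0, fsm1, fs10, fs11, smul_sub_smul₂]
    exact Submodule.smul_of_tower_mem NN c (Lt (d 0) (d 1))
  | add p₁ p₂ hp₁ hp₂ =>
    rw [mul_add, Sig_add, Sig_add, smul_add,
      show t • Sig p₁ + t • Sig p₂ - (Sig (ψ t * p₁) + Sig (ψ t * p₂)) =
        (t • Sig p₁ - Sig (ψ t * p₁)) + (t • Sig p₂ - Sig (ψ t * p₂)) by abel]
    exact add_mem hp₁ hp₂

lemma step (j : Fin 4) (w : Fin 3 → A) (hw : w - Sig (Φ w) ∈ NN) :
    (X j : A) • w - Sig (Φ ((X j : A) • w)) ∈ NN := by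
  have hstab : (X j : A) • Sig (Φ w) - Sig (ψ (X j) * Φ w) ∈ NN := by
    fin_cases j
    exacts [SigStab_x (Φ w), SigStab_y (Φ w), SigStab_z (Φ w), SigStab_t (Φ w)]
  rw [Φ_smul,
    show (X j : A) • w - Sig (ψ (X j) * Φ w) =
      (X j : A) • (w - Sig (Φ w)) + ((X j : A) • Sig (Φ w) - Sig (ψ (X j) * Φ w)) by
        rw [smul_sub]; abel]
  exact add_mem (NN.smul_mem _ hw) hstab

lemma key_add (w₁ w₂ : Fin 3 → A) (h₁ : w₁ - Sig (Φ w₁) ∈ NN)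
    (h₂ : w₂ - Sig (Φ w₂) ∈ NN) : (w₁ + w₂) - Sig (Φ (w₁ + w₂)) ∈ NN := by
  rw [Φ_add, Sig_add,
    show w₁ + w₂ - (Sig (Φ w₁) + Sig (Φ w₂)) =
      (w₁ - Sig (Φ w₁)) + (w₂ - Sig (Φ w₂)) by abel]
  exact add_mem h₁ h₂

lemma key_aux (a : A) (E : Fin 3 → A)
    (hbase : ∀ r : ℂ, ((C r : A) • E) - Sig (Φ ((C r : A) • E)) ∈ NN) :
    a • E - Sig (Φ (a • E)) ∈ NN := by
  induction a using MvPolynomial.induction_on with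
  | C r => exact hbase r
  | add p₁ p₂ hp₁ hp₂ =>
    rw [add_smul]; exact key_add _ _ hp₁ hp₂
  | mul_X p j hp =>
    rw [mul_comm, mul_smul]
    exact step j _ hp

lemma hψC (r : ℂ) : ψ (C r) = C r := by
  simp [ψ, algebraMap_eq]

lemma σm01 : σm 0 1 = ![1, 0, 0] := by
  rw [σm_r1 (by omega) (by omega) (show (1 - 0) / 3 = 0 by omega)]
  funext i; fin_cases i <;> simp

lemma σm10 : σm 1 0 = ![0, 1, 0] := by
  rw [σm_odd (by omega) (by omega) (show (1 - 0) / 2 = 0 by omega)]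
  funext i; fin_cases i <;> simp

lemma σm00 : σm 0 0 = ![0, 0, 1] := by
  rw [σm_even (by omega) (by omega) (show (0 - 0) / 2 = 0 by omega)]
  funext i; fin_cases i <;> simp

lemma key (w : Fin 3 → A) : w - Sig (Φ w) ∈ NN := by
  have hb0 : ∀ r : ℂ, ((C r : A) • (![1, 0, 0] : Fin 3 → A)) -
      Sig (Φ ((C r : A) • (![1, 0, 0] : Fin 3 → A))) ∈ NN := by
    intro r
    have hΦ : Φ ((C r : A) • (![1, 0, 0] : Fin 3 → A)) = monomial (Finsupp.single 1 1) r := by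
      rw [show Φ ((C r : A) • (![1, 0, 0] : Fin 3 → A)) = ψ (C r * 1) * v + ψ (C r * 0) * u + ψ (C r * 0) by
        simp only [Φ, Pi.smul_apply, smul_eq_mul, Matrix.cons_val_zero, Matrix.cons_val_one, Matrix.cons_val_two, Matrix.head_cons, Matrix.tail_cons]]
      simp only [mul_one, mul_zero, map_zero, zero_mul, zero_add, add_zero, hψC,
        hv_mono, C_mul_monomial]
    rw [hΦ, Sig_monomial,
      show ((Finsupp.single (1 : Fin 2) 1) 0) = 0 by simp [Finsupp.single_apply],
      show ((Finsupp.single (1 : Fin 2) 1) 1) = 1 by simp, σm01]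
    refine mem_of_eq ?_ NN.zero_mem
    funext i; fin_cases i <;> simp [MvPolynomial.smul_eq_C_mul]
  have hb1 : ∀ r : ℂ, ((C r : A) • (![0, 1, 0] : Fin 3 → A)) -
      Sig (Φ ((C r : A) • (![0, 1, 0] : Fin 3 → A))) ∈ NN := by
    intro r
    have hΦ : Φ ((C r : A) • (![0, 1, 0] : Fin 3 → A)) = monomial (Finsupp.single 0 1) r := by
      rw [show Φ ((C r : A) • (![0, 1, 0] : Fin 3 → A)) = ψ (C r * 0) * v + ψ (C r * 1) * u + ψ (C r * 0) by
        simp only [Φ, Pi.smul_apply, smul_eq_mul, Matrix.cons_val_zero, Matrix.cons_val_one, Matrix.cons_val_two, Matrix.head_cons, Matrix.tail_cons]]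
      simp only [mul_one, mul_zero, map_zero, zero_mul, zero_add, add_zero, hψC,
        hu_mono, C_mul_monomial]
    rw [hΦ, Sig_monomial,
      show ((Finsupp.single (0 : Fin 2) 1) 0) = 1 by simp,
      show ((Finsupp.single (0 : Fin 2) 1) 1) = 0 by simp [Finsupp.single_apply], σm10]
    refine mem_of_eq ?_ NN.zero_mem
    funext i; fin_cases i <;> simp [MvPolynomial.smul_eq_C_mul]
  have hb2 : ∀ r : ℂ, ((C r : A) • (![0, 0, 1] : Fin 3 → A)) -
      Sig (Φ ((C r : A) • (![0, 0, 1] : Fin 3 → A))) ∈ NN := by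
    intro r
    have hΦ : Φ ((C r : A) • (![0, 0, 1] : Fin 3 → A)) = monomial 0 r := by
      rw [show Φ ((C r : A) • (![0, 0, 1] : Fin 3 → A)) = ψ (C r * 0) * v + ψ (C r * 0) * u + ψ (C r * 1) by
        simp only [Φ, Pi.smul_apply, smul_eq_mul, Matrix.cons_val_zero, Matrix.cons_val_one, Matrix.cons_val_two, Matrix.head_cons, Matrix.tail_cons]]
      simp only [mul_one, mul_zero, map_zero, zero_mul, zero_add, add_zero, hψC]
      exact C_apply
    rw [hΦ, Sig_monomial,
      show ((0 : Fin 2 →₀ ℕ) 0) = 0 by simp,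
      show ((0 : Fin 2 →₀ ℕ) 1) = 0 by simp, σm00]
    refine mem_of_eq ?_ NN.zero_mem
    funext i; fin_cases i <;> simp [MvPolynomial.smul_eq_C_mul]
  have hw : w 0 • (![1, 0, 0] : Fin 3 → A) + w 1 • (![0, 1, 0] : Fin 3 → A) +
      w 2 • (![0, 0, 1] : Fin 3 → A) = w := by
    funext i; fin_cases i <;> simp
  have hsum := key_add _ _ (key_add _ _ (key_aux (w 0) _ hb0) (key_aux (w 1) _ hb1))
    (key_aux (w 2) _ hb2)
  rwa [hw] at hsum


lemma M00 : M 0 0 = -x := rfl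
lemma M10 : M 1 0 = y := rfl
lemma M20 : M 2 0 = 0 := rfl
lemma M01 : M 0 1 = -y := rfl
lemma M11 : M 1 1 = z := rfl
lemma M21 : M 2 1 = -x ^ 2 := rfl
lemma M02 : M 0 2 = -z := rfl
lemma M12 : M 1 2 = 0 := rfl
lemma M22 : M 2 2 = t := rfl
lemma M03 : M 0 3 = -t := rfl
lemma M13 : M 1 3 = -(x * z) := rfl
lemma M23 : M 2 3 = z ^ 2 := rfl
lemma M04 : M 0 4 = 0 := rfl
lemma M14 : M 1 4 = t := rfl
lemma M24 : M 2 4 = -(y * z) := rfl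
lemma M05 : M 0 5 = 0 := rfl
lemma M15 : M 1 5 = x ^ 2 := rfl
lemma M25 : M 2 5 = -(x * z) + y ^ 2 := rfl

lemma Φcol (j : Fin 6) :
    ψ ((fun i => M i j) 0) * v + ψ ((fun i => M i j) 1) * u + ψ ((fun i => M i j) 2) = 0 := by
  fin_cases j <;> beta_reduce
  · show ψ (M 0 0) * v + ψ (M 1 0) * u + ψ (M 2 0) = 0
    rw [M00, M10, M20]; simp only [map_neg, map_zero, ψx, ψy]; ring
  · show ψ (M 0 1) * v + ψ (M 1 1) * u + ψ (M 2 1) = 0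
    rw [M01, M11, M21]; simp only [map_neg, map_pow, ψx, ψy, ψz]; ring
  · show ψ (M 0 2) * v + ψ (M 1 2) * u + ψ (M 2 2) = 0
    rw [M02, M12, M22]; simp only [map_neg, map_zero, ψz, ψt]; ring
  · show ψ (M 0 3) * v + ψ (M 1 3) * u + ψ (M 2 3) = 0
    rw [M03, M13, M23]; simp only [map_neg, map_mul, map_pow, ψx, ψz, ψt]; ring
  · show ψ (M 0 4) * v + ψ (M 1 4) * u + ψ (M 2 4) = 0
    rw [M04, M14, M24]; simp only [map_neg, map_mul, map_zero, ψy, ψz, ψt]; ring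
  · show ψ (M 0 5) * v + ψ (M 1 5) * u + ψ (M 2 5) = 0
    rw [M05, M15, M25]; simp only [map_neg, map_mul, map_add, map_pow, map_zero, ψx, ψy, ψz]; ring

theorem ker_phi_eq_columns_of_M :
    ∀ w : Fin 3 → A,
      ψ (w 0) * v + ψ (w 1) * u + ψ (w 2) = 0 ↔
      w ∈ Submodule.span A {c : Fin 3 → A | ∃ j : Fin 6, c = fun i => M i j} := by
  intro w
  constructor
  · intro h
    have hk := key w
    rw [show Φ w = 0 from h, Sig_zero, sub_zero] at hk
    exact hk
  · intro h
    induction h using Submodule.span_induction with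
    | mem c hc =>
      obtain ⟨j, rfl⟩ := hc
      exact Φcol j
    | zero => simp
    | add p₁ p₂ h₁ h₂ ih₁ ih₂ =>
      simp only [Pi.add_apply, map_add]
      linear_combination ih₁ + ih₂
    | smul a p hp ih =>
      simp only [Pi.smul_apply, smul_eq_mul, map_mul]
      linear_combination (ψ a) * ih
end Reid
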